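/- arXiv:2009.06550 — 2 statements merged into one kernel-verified Lean document; each statement's English description precedes it below -/
import Mathlib

section
/- If {x ∈ C : A x ∈ −K} = {0} (the primal recession cone is trivial), then A(C) ∩ (−K) = {0} and there exists y ∈ relint K* with A* y ∈ relint C* (the dual recession cone is strictly feasible). -/
open RealInnerProductSpace Set Pointwise

variable {E E' : Type*}
  [NormedAddCommGroup E] [InnerProductSpace ℝ E] [FiniteDimensional ℝ E]
  [NormedAddCommGroup E'] [InnerProductSpace ℝ E'] [FiniteDimensional ℝ E']

/-- A nonempty closed convex cone containing `0`. -/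
structure IsClosedConvexCone {F : Type*} [NormedAddCommGroup F] [InnerProductSpace ℝ F]
    (K : Set F) : Prop where
  closed : IsClosed K
  convex : Convex ℝ K
  smul_mem : ∀ ⦃x⦄, x ∈ K → ∀ ⦃t : ℝ⦄, 0 ≤ t → t • x ∈ K
  zero_mem : (0 : F) ∈ K

/-- The dual cone `S* = {y : ⟨x,y⟩ ≥ 0 ∀ x ∈ S}`. -/
def dualCone {F : Type*} [NormedAddCommGroup F] [InnerProductSpace ℝ F] (S : Set F) : Set F :=
  {y | ∀ x ∈ S, 0 ≤ ⟪x, y⟫}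

/-- The polar cone `S° = {y : ⟨x,y⟩ ≤ 0 ∀ x ∈ S}`. -/
def polarCone {F : Type*} [NormedAddCommGroup F] [InnerProductSpace ℝ F] (S : Set F) : Set F :=
  {y | ∀ x ∈ S, ⟪x, y⟫ ≤ 0}

/-- Primal feasible set `X(b) = {x ∈ C : b - A x ∈ K}`. -/
def Xfeas (A : E →ₗ[ℝ] E') (K : Set E') (C : Set E) (b : E') : Set E :=
  {x | x ∈ C ∧ b - A x ∈ K}

/-- Dual feasible set `Y(c) = {y ∈ K* : A* y - c ∈ C*}`. -/
def Yfeas (A : E →ₗ[ℝ] E') (K : Set E') (C : Set E) (c : E) : Set E' :=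
  {y | y ∈ dualCone K ∧ LinearMap.adjoint A y - c ∈ dualCone C}

/-- Primal optimal value `P* = sup {⟨c,x⟩ : x ∈ X(b)}`. -/
noncomputable def Pval (A : E →ₗ[ℝ] E') (K : Set E') (C : Set E) (b : E') (c : E) : ℝ :=
  sSup ((fun x => ⟪c, x⟫) '' Xfeas A K C b)

/-- Dual optimal value `D* = inf {⟨b,y⟩ : y ∈ Y(c)}`. -/
noncomputable def Dval (A : E →ₗ[ℝ] E') (K : Set E') (C : Set E) (b : E') (c : E) : ℝ :=
  sInf ((fun y => ⟪b, y⟫) '' Yfeas A K C c)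

/-- Recession cone of the primal feasible region: `{x ∈ C : A x ∈ -K}`. -/
def recXSet (A : E →ₗ[ℝ] E') (K : Set E') (C : Set E) : Set E :=
  {x | x ∈ C ∧ A x ∈ -K}

/-- Recession cone of the dual feasible region: `{y ∈ K* : A* y ∈ C*}`. -/
def recYSet (A : E →ₗ[ℝ] E') (K : Set E') (C : Set E) : Set E' :=
  {y | y ∈ dualCone K ∧ LinearMap.adjoint A y ∈ dualCone C}

/-- `X(b)` is almost feasible. -/
def AlmostFeasX (A : E →ₗ[ℝ] E') (K : Set E') (C : Set E) (b : E') : Prop :=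
  ∀ ε : ℝ, 0 < ε → ∃ bε : E', ‖bε‖ ≤ ε ∧ (Xfeas A K C (b + bε)).Nonempty

/-- `Y(c)` is almost feasible. -/
def AlmostFeasY (A : E →ₗ[ℝ] E') (K : Set E') (C : Set E) (c : E) : Prop :=
  ∀ ε : ℝ, 0 < ε → ∃ cε : E, ‖cε‖ ≤ ε ∧ (Yfeas A K C (c + cε)).Nonempty


section AuxLemmas

variable {F : Type*} [NormedAddCommGroup F] [InnerProductSpace ℝ F]

lemma zero_mem_dualCone (S : Set F) : (0 : F) ∈ dualCone S := fun x _ => by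
  rw [inner_zero_right]

lemma add_mem_dualCone {S : Set F} {a b : F} (ha : a ∈ dualCone S) (hb : b ∈ dualCone S) :
    a + b ∈ dualCone S := fun x hx => by
  rw [inner_add_right]; exact add_nonneg (ha x hx) (hb x hx)

lemma smul_mem_dualCone {S : Set F} {a : F} (ha : a ∈ dualCone S) {t : ℝ} (ht : 0 ≤ t) :
    t • a ∈ dualCone S := fun x hx => by
  rw [real_inner_smul_right]; exact mul_nonneg ht (ha x hx)

lemma convex_dualCone (S : Set F) : Convex ℝ (dualCone S) := by
  intro a ha b hb s t hs ht _
  exact add_mem_dualCone (smul_mem_dualCone ha hs) (smul_mem_dualCone hb ht)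

lemma dualCone_closure (S : Set F) : dualCone (closure S) = dualCone S := by
  apply Subset.antisymm
  · intro y hy x hx; exact hy x (subset_closure hx)
  · intro y hy x hx
    have hcl : IsClosed {w : F | 0 ≤ ⟪w, y⟫} :=
      isClosed_le continuous_const (continuous_id.inner continuous_const)
    exact closure_minimal (fun w hw => hy w hw) hcl hx

lemma IsClosedConvexCone.add_mem {Q : Set F} (hQ : IsClosedConvexCone Q) {a b : F}
    (ha : a ∈ Q) (hb : b ∈ Q) : a + b ∈ Q := by
  have hmid : (1/2 : ℝ) • a + (1/2 : ℝ) • b ∈ Q :=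
    hQ.convex ha hb (by norm_num) (by norm_num) (by norm_num)
  have := hQ.smul_mem hmid (t := 2) (by norm_num)
  rwa [show (2:ℝ) • ((1/2 : ℝ) • a + (1/2 : ℝ) • b) = a + b by module] at this

lemma dualCone_dualCone_of_convexCone [FiniteDimensional ℝ F] (K : ConvexCone ℝ F)
    (hne : (K : Set F).Nonempty) (hc : IsClosed (K : Set F)) :
    dualCone (dualCone (K : Set F)) = K := by
  have hd : ∀ s : Set F, dualCone s = (ProperCone.innerDual s : Set F) := fun s => by
    ext y; simp [dualCone]
  lift K to ProperCone ℝ F using ⟨hne, hc⟩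
  have hK : ((K : ConvexCone ℝ F) : Set F) = (K : Set F) := rfl
  rw [hK, hd, hd, ProperCone.innerDual_innerDual]

lemma IsClosedConvexCone.dual_dual [FiniteDimensional ℝ F] {Q : Set F}
    (hQ : IsClosedConvexCone Q) : dualCone (dualCone Q) = Q := by
  let Qc : ConvexCone ℝ F :=
    { carrier := Q
      smul_mem' := fun c hc x hx => hQ.smul_mem hx hc.le
      add_mem' := fun x hx y hy => hQ.add_mem hx hy }
  have key := dualCone_dualCone_of_convexCone Qc ⟨0, hQ.zero_mem⟩ hQ.closed
  exact key

lemma mem_intrinsicInterior_iff_of_zero_mem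
    {s : Set F} (h0 : (0 : F) ∈ s) {x : F} :
    x ∈ intrinsicInterior ℝ s ↔ x ∈ Submodule.span ℝ s ∧
      ∃ ε > 0, ∀ v ∈ Submodule.span ℝ s, ‖v - x‖ < ε → v ∈ s := by
  have hsp : (affineSpan ℝ s : Set F) = (Submodule.span ℝ s : Set F) := by
    have := affineSpan_insert_zero (k := ℝ) s
    rwa [insert_eq_self.mpr h0] at this
  constructor
  · rintro hx
    obtain ⟨y, hy, rfl⟩ := mem_intrinsicInterior.mp hx
    refine ⟨by rw [← SetLike.mem_coe, ← hsp]; exact y.2, ?_⟩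
    obtain ⟨ε, hε, hball⟩ := Metric.mem_nhds_iff.mp (mem_interior_iff_mem_nhds.mp hy)
    refine ⟨ε, hε, fun v hv hvx => ?_⟩
    have hv' : v ∈ affineSpan ℝ s := by rw [← SetLike.mem_coe, hsp]; exact hv
    have : (⟨v, hv'⟩ : affineSpan ℝ s) ∈ Metric.ball y ε := by
      rw [Metric.mem_ball, Subtype.dist_eq, dist_eq_norm]; exact hvx
    exact hball this
  · rintro ⟨hxs, ε, hε, hb⟩
    have hx' : x ∈ affineSpan ℝ s := by rw [← SetLike.mem_coe, hsp]; exact hxs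
    refine mem_intrinsicInterior.mpr ⟨⟨x, hx'⟩, ?_, rfl⟩
    rw [mem_interior_iff_mem_nhds, Metric.mem_nhds_iff]
    refine ⟨ε, hε, fun z hz => ?_⟩
    have hzs : (z : F) ∈ Submodule.span ℝ s := by
      rw [← SetLike.mem_coe, ← hsp]; exact z.2
    refine hb z hzs ?_
    rw [← dist_eq_norm]
    exact (Subtype.dist_eq z ⟨x, hx'⟩) ▸ hz

lemma add_mem_intrinsicInterior {s : Set F} (h0 : (0 : F) ∈ s)
    (hadd : ∀ a ∈ s, ∀ b ∈ s, a + b ∈ s) {a b : F}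
    (ha : a ∈ intrinsicInterior ℝ s) (hb : b ∈ s) :
    a + b ∈ intrinsicInterior ℝ s := by
  rw [mem_intrinsicInterior_iff_of_zero_mem h0] at ha ⊢
  obtain ⟨haspan, ε, hε, hball⟩ := ha
  have hbspan : b ∈ Submodule.span ℝ s := Submodule.subset_span hb
  refine ⟨Submodule.add_mem _ haspan hbspan, ε, hε, fun v hv hvx => ?_⟩
  have h1 : v - b ∈ Submodule.span ℝ s := Submodule.sub_mem _ hv hbspan
  have h2 : ‖(v - b) - a‖ < ε := by
    have h3 : (v - b) - a = v - (a + b) := by abel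
    rw [h3]; exact hvx
  have := hadd _ (hball _ h1 h2) _ hb
  rwa [sub_add_cancel] at this

end AuxLemmas

theorem stmt10 (A : E →ₗ[ℝ] E') (K : Set E') (C : Set E)
    (hK : IsClosedConvexCone K) (hC : IsClosedConvexCone C)
    (htriv : recXSet A K C = {0}) :
    (⇑A '' C) ∩ (-K) = {0} ∧
    ∃ y ∈ intrinsicInterior ℝ (dualCone K),
      LinearMap.adjoint A y ∈ intrinsicInterior ℝ (dualCone C) := by
  classical
  set A' := LinearMap.adjoint A with hA'
  set W : Set E := {w | ∃ y ∈ dualCone K, ∃ s ∈ dualCone C, w = s - A' y} with hWdef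
  have hW0 : (0 : E) ∈ W := ⟨0, zero_mem_dualCone K, 0, zero_mem_dualCone C, by simp⟩
  have hWdual : dualCone W = recXSet A K C := by
    ext x
    constructor
    · intro hx
      have hxC : x ∈ C := by
        rw [← hC.dual_dual]
        intro s hs
        have := hx (s - A' 0) ⟨0, zero_mem_dualCone K, s, hs, rfl⟩
        simpa using this
      have hxK : A x ∈ -K := by
        rw [Set.mem_neg, ← hK.dual_dual]
        intro y hy
        have := hx (0 - A' y) ⟨y, hy, 0, zero_mem_dualCone C, rfl⟩
        rw [zero_sub, inner_neg_left] at this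
        have h2 : ⟪A' y, x⟫ ≤ 0 := by linarith
        rw [LinearMap.adjoint_inner_left] at h2
        rw [inner_neg_right]; linarith
      exact ⟨hxC, hxK⟩
    · rintro ⟨hxC, hxK⟩ w ⟨y, hy, s, hs, rfl⟩
      rw [inner_sub_left, LinearMap.adjoint_inner_left]
      have h1 : 0 ≤ ⟪s, x⟫ := by rw [real_inner_comm]; exact hs x hxC
      have h2 : ⟪y, A x⟫ ≤ 0 := by
        rw [Set.mem_neg] at hxK
        have := hy _ hxK
        rw [inner_neg_left, real_inner_comm] at this
        linarith
      linarith
  have hWadd : ∀ a ∈ W, ∀ b ∈ W, a + b ∈ W := by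
    rintro a ⟨y1, hy1, s1, hs1, rfl⟩ b ⟨y2, hy2, s2, hs2, rfl⟩
    exact ⟨y1 + y2, add_mem_dualCone hy1 hy2, s1 + s2, add_mem_dualCone hs1 hs2,
      by rw [map_add]; abel⟩
  have hWsmul : ∀ (c : ℝ), 0 < c → ∀ a ∈ W, c • a ∈ W := by
    rintro c hc a ⟨y, hy, s, hs, rfl⟩
    exact ⟨c • y, smul_mem_dualCone hy hc.le, c • s, smul_mem_dualCone hs hc.le,
      by rw [map_smul, smul_sub]⟩
  have hWconvex : Convex ℝ W := by
    intro a ha b hb p q hp hq hpq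
    rcases eq_or_lt_of_le hp with hp0 | hp0
    · rw [← hp0] at hpq ⊢; simp only [zero_smul, zero_add] at hpq ⊢
      rw [hpq, one_smul]; exact hb
    rcases eq_or_lt_of_le hq with hq0 | hq0
    · rw [← hq0] at hpq ⊢; simp only [zero_smul, add_zero] at hpq ⊢
      rw [hpq, one_smul]; exact ha
    exact hWadd _ (hWsmul p hp0 a ha) _ (hWsmul q hq0 b hb)
  have hclW : closure W = univ := by
    let Wc : ConvexCone ℝ E :=
      { carrier := W
        smul_mem' := fun c hc x hx => hWsmul c hc x hx
        add_mem' := fun x hx y hy => hWadd x hx y hy }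
    have key := dualCone_dualCone_of_convexCone Wc.closure
      ⟨0, subset_closure hW0⟩ (by rw [ConvexCone.coe_closure]; exact isClosed_closure)
    have hset : dualCone (dualCone (closure W)) = closure W := by
      have := key
      rwa [ConvexCone.coe_closure] at this
    have hd : dualCone (closure W) = {0} := by
      rw [dualCone_closure, hWdual, htriv]
    rw [hd] at hset
    rw [← hset]
    ext z; simp only [mem_univ, iff_true]
    intro x hx; rw [Set.mem_singleton_iff] at hx; rw [hx, inner_zero_left]
  have hWuniv : W = univ := by
    have haff : affineSpan ℝ W = ⊤ := by
      rw [eq_top_iff]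
      intro z _
      have hcl : IsClosed (affineSpan ℝ W : Set E) :=
        (affineSpan ℝ W).closed_of_finiteDimensional
      have hsub : closure W ⊆ (affineSpan ℝ W : Set E) :=
        closure_minimal (subset_affineSpan ℝ W) hcl
      rw [hclW] at hsub
      exact hsub (mem_univ z)
    obtain ⟨x0, hx0⟩ := hWconvex.interior_nonempty_iff_affineSpan_eq_top.mpr haff
    apply eq_univ_of_forall
    intro z
    have hz2 : (2:ℝ) • z - x0 ∈ closure W := by rw [hclW]; trivial
    have hcombo := hWconvex.combo_interior_closure_mem_interior hx0 hz2
      (a := 1/2) (b := 1/2) (by norm_num) (by norm_num) (by norm_num)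
    have h5 : (1/2 : ℝ) • x0 + (1/2 : ℝ) • ((2:ℝ) • z - x0) = z := by module
    rw [h5] at hcombo
    exact interior_subset hcombo
  constructor
  · ext z
    constructor
    · rintro ⟨⟨x, hxC, rfl⟩, hzK⟩
      have hx : x ∈ recXSet A K C := ⟨hxC, hzK⟩
      rw [htriv, Set.mem_singleton_iff] at hx
      rw [Set.mem_singleton_iff, hx, map_zero]
    · intro hz
      rw [Set.mem_singleton_iff] at hz
      subst hz
      refine ⟨⟨0, hC.zero_mem, map_zero A⟩, ?_⟩
      rw [Set.mem_neg, neg_zero]; exact hK.zero_mem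
  · obtain ⟨y₁, hy₁⟩ :=
      Set.Nonempty.intrinsicInterior (convex_dualCone K) ⟨0, zero_mem_dualCone K⟩
    obtain ⟨s₁, hs₁⟩ :=
      Set.Nonempty.intrinsicInterior (convex_dualCone C) ⟨0, zero_mem_dualCone C⟩
    have hv : A' y₁ - s₁ ∈ W := by rw [hWuniv]; trivial
    obtain ⟨y₂, hy₂, s₂, hs₂, heq⟩ := hv
    refine ⟨y₁ + y₂, add_mem_intrinsicInterior (zero_mem_dualCone K)
      (fun a ha b hb => add_mem_dualCone ha hb) hy₁ hy₂, ?_⟩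
    have hsum : A' (y₁ + y₂) = s₁ + s₂ := by
      have h6 : A' y₁ + A' y₂ = s₂ + s₁ := by
        rw [← sub_eq_sub_iff_add_eq_add]; exact heq
      rw [map_add, h6, add_comm]
    rw [hsum]
    exact add_mem_intrinsicInterior (zero_mem_dualCone C)
      (fun a ha b hb => add_mem_dualCone ha hb) hs₁ hs₂
end

section
/- Suppose the primal feasible set X(b) is nonempty and pointed, i.e., its lineality space is trivial: {x ∈ C : A x ∈ −K} ∩ (−{x ∈ C : A x ∈ −K}) = {0}. Then: (1) X(b) is a bounded set if and only if there exists y ∈ relint K* with A* y ∈ relint C*; (2) exactly one of the following two statements holds: either there exists a nonzero x ∈ C with A x ∈ −K, or there exists y ∈ relint K* with A* y ∈ relint C*. -/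
open RealInnerProductSpace Set Pointwise

variable {E E' : Type*}
  [NormedAddCommGroup E] [InnerProductSpace ℝ E] [FiniteDimensional ℝ E]
  [NormedAddCommGroup E'] [InnerProductSpace ℝ E'] [FiniteDimensional ℝ E']

section Toolkit
variable {F : Type*} [NormedAddCommGroup F] [InnerProductSpace ℝ F]

/-- Prolongation property of relative interior points. -/
lemma intrinsic_extend {s : Set F} {x z : F} (hx : x ∈ intrinsicInterior ℝ s) (hz : z ∈ s) :
    ∃ t : ℝ, 0 < t ∧ x + t • (x - z) ∈ s := by
  obtain ⟨y, hy, rfl⟩ := hx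
  have hxs : (y : F) ∈ s := (interior_subset hy : y ∈ Subtype.val ⁻¹' s)
  by_cases hxz : (y : F) = z
  · refine ⟨1, one_pos, ?_⟩
    simp only [hxz]
    simpa using hz
  obtain ⟨ε, hε, hball⟩ := Metric.mem_nhds_iff.mp (mem_interior_iff_mem_nhds.mp hy)
  have hnz : (0:ℝ) < ‖(y : F) - z‖ := by
    rw [norm_pos_iff, sub_ne_zero]; exact hxz
  set t : ℝ := ε / (2 * ‖(y : F) - z‖) with ht_def
  have ht : 0 < t := div_pos hε (by positivity)
  set p : F := (y : F) + t • ((y : F) - z) with hp_def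
  have hpV : p ∈ affineSpan ℝ s := by
    have h := (affineSpan ℝ s).smul_vsub_vadd_mem t y.2 (subset_affineSpan ℝ s hz) y.2
    simpa [vsub_eq_sub, vadd_eq_add, add_comm] using h
  have hdist : dist (⟨p, hpV⟩ : affineSpan ℝ s) y < ε := by
    rw [Subtype.dist_eq]
    have h1 : dist p (y : F) = t * ‖(y : F) - z‖ := by
      rw [dist_eq_norm, hp_def]
      simp [norm_smul, abs_of_pos ht]
    have h2 : t * ‖(y : F) - z‖ = ε / 2 := by
      rw [ht_def]; field_simp
    rw [h1, h2]; linarith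
  exact ⟨t, ht, hball (Metric.mem_ball.mpr hdist)⟩

/-- When the affine span is everything, the intrinsic interior is the interior. -/
lemma intrinsicInterior_eq_interior_of_affineSpan_top {s : Set F}
    (h : affineSpan ℝ s = ⊤) : intrinsicInterior ℝ s = interior s := by
  have hoe : Topology.IsOpenEmbedding (Subtype.val : affineSpan ℝ s → F) := by
    refine ⟨Topology.IsEmbedding.subtypeVal, ?_⟩
    rw [Subtype.range_coe_subtype]
    convert isOpen_univ
    ext x; simp [h]
  rw [intrinsicInterior,
    ← hoe.isOpenMap.preimage_interior_eq_interior_preimage hoe.continuous,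
    Set.image_preimage_eq_inter_range, Subtype.range_coe_subtype]
  ext x; simp [h]


/-- Combination of a relative interior point with a closure point lands in the
relative interior (for convex sets containing `0` in finite dimensions). -/
lemma combo_mem_intrinsicInterior [FiniteDimensional ℝ F] {s : Set F} (hs : Convex ℝ s)
    (h0 : (0:F) ∈ s) {x z : F} (hx : x ∈ intrinsicInterior ℝ s) (hz : z ∈ closure s)
    {a b : ℝ} (ha : 0 < a) (hb : 0 ≤ b) (hab : a + b = 1) :
    a • x + b • z ∈ intrinsicInterior ℝ s := by
  set V : Submodule ℝ F := Submodule.span ℝ s with hV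
  let φ : V →ᵃⁱ[ℝ] F := V.subtypeₗᵢ.toAffineIsometry
  set s₀ : Set V := Subtype.val ⁻¹' s with hs₀
  have hsub : s ⊆ (V : Set F) := Submodule.subset_span
  have hφval : ⇑φ = (Subtype.val : V → F) := rfl
  have himg : ⇑φ '' s₀ = s := by
    rw [hφval]
    ext w
    constructor
    · rintro ⟨⟨v, hv⟩, hvs, rfl⟩; exact hvs
    · intro hw; exact ⟨⟨w, hsub hw⟩, hw, rfl⟩
  have h0' : (0 : V) ∈ s₀ := by
    show ((0 : V) : F) ∈ s; simpa using h0
  -- the span of s₀ is everything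
  have hspan₀ : Submodule.span ℝ s₀ = (⊤ : Submodule ℝ V) := by
    rw [eq_top_iff]
    rintro v -
    have hvV : (v : F) ∈ Submodule.span ℝ s := v.2
    have hmap : (v : F) ∈ Submodule.map V.subtype (Submodule.span ℝ s₀) := by
      rw [Submodule.map_span]
      have : V.subtype '' s₀ = s := by rw [← himg]; rfl
      rw [this]; exact hvV
    obtain ⟨w, hw, hwv⟩ := hmap
    have : w = v := Subtype.ext hwv
    rwa [← this]
  have haff₀ : affineSpan ℝ s₀ = (⊤ : AffineSubspace ℝ V) := by
    have hset : (affineSpan ℝ s₀ : Set V) = (Submodule.span ℝ s₀ : Set V) := by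
      rw [← affineSpan_insert_zero, insert_eq_of_mem h0']
    have : (affineSpan ℝ s₀ : Set V) = univ := by rw [hset, hspan₀]; simp
    apply AffineSubspace.coe_injective
    rw [hset, hspan₀]
    simp
  -- identify the intrinsic interior of s with the image of the interior of s₀
  have hII : intrinsicInterior ℝ s = ⇑φ '' interior s₀ := by
    conv_lhs => rw [← himg]
    rw [φ.image_intrinsicInterior, intrinsicInterior_eq_interior_of_affineSpan_top haff₀]
  rw [hII] at hx ⊢
  obtain ⟨x', hx', rfl⟩ := hx
  have hVclosed : IsClosed (V : Set F) := Submodule.closed_of_finiteDimensional V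
  have hzV : z ∈ V := closure_minimal hsub hVclosed hz
  set z' : V := ⟨z, hzV⟩ with hz'def
  have hz' : z' ∈ closure s₀ := by
    rw [(Topology.IsEmbedding.subtypeVal).closure_eq_preimage_closure_image s₀]
    have : Subtype.val '' s₀ = s := by rw [← himg]; rfl
    rw [mem_preimage, this]
    exact hz
  have hconv₀ : Convex ℝ s₀ := hs.linear_preimage V.subtype
  have hmem := hconv₀.combo_interior_closure_mem_interior hx' hz' ha hb hab
  refine ⟨a • x' + b • z', hmem, ?_⟩
  rw [hφval]
  push_cast
  rfl

lemma IsClosedConvexCone.add_mem_s11 {K : Set F} (hK : IsClosedConvexCone K) {u v : F}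
    (hu : u ∈ K) (hv : v ∈ K) : u + v ∈ K := by
  have h2 : (2:ℝ) • ((1/2 : ℝ) • u + (1/2 : ℝ) • v) ∈ K :=
    hK.smul_mem (hK.convex hu hv (by norm_num) (by norm_num) (by norm_num)) (by norm_num)
  convert h2 using 1
  module

lemma dualCone_eq_innerDualCone [CompleteSpace F] (S : Set F) :
    dualCone S = (ProperCone.innerDual S : Set F) := rfl

lemma bipolar {K : Set F} [FiniteDimensional ℝ F] (hK : IsClosedConvexCone K) :
    dualCone (dualCone K) = K := by
  let Kc : ProperCone ℝ F :=
    { carrier := K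
      add_mem' := fun hx hy => hK.add_mem_s11 hx hy
      zero_mem' := hK.zero_mem
      smul_mem' := fun c x hx => hK.smul_mem hx c.2
      isClosed' := hK.closed }
  have h := ProperCone.innerDual_innerDual Kc
  have h' := congrArg (fun c : ProperCone ℝ F => (c : Set F)) h
  exact h'

lemma dualCone_zero_mem (S : Set F) : (0:F) ∈ dualCone S := by
  intro x hx; simp

lemma dualCone_add_mem {S : Set F} {y₁ y₂ : F} (h₁ : y₁ ∈ dualCone S) (h₂ : y₂ ∈ dualCone S) :
    y₁ + y₂ ∈ dualCone S := by
  intro x hx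
  have := add_nonneg (h₁ x hx) (h₂ x hx)
  rwa [← inner_add_right] at this

lemma dualCone_smul_mem {S : Set F} {y : F} (h : y ∈ dualCone S) {c : ℝ} (hc : 0 ≤ c) :
    c • y ∈ dualCone S := by
  intro x hx
  rw [real_inner_smul_right]
  exact mul_nonneg hc (h x hx)

lemma isClosedConvexCone_dualCone [CompleteSpace F] (S : Set F) : IsClosedConvexCone (dualCone S) := by
  refine ⟨?_, ?_, fun x hx t ht => dualCone_smul_mem hx ht, dualCone_zero_mem S⟩
  · rw [dualCone_eq_innerDualCone]; exact (ProperCone.innerDual S).isClosed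
  · rw [dualCone_eq_innerDualCone]; exact (ProperCone.innerDual S).convex

end Toolkit

section MainLemmas

open Filter Bornology

variable {E E' : Type*}
  [NormedAddCommGroup E] [InnerProductSpace ℝ E] [FiniteDimensional ℝ E]
  [NormedAddCommGroup E'] [InnerProductSpace ℝ E'] [FiniteDimensional ℝ E']

/-- Auxiliary set `S = C* - A*(K*)`. -/
def Sset (A : E →ₗ[ℝ] E') (K : Set E') (C : Set E) : Set E :=
  {v | ∃ y ∈ dualCone K, ∃ z ∈ dualCone C, v = z - LinearMap.adjoint A y}

lemma Sset_zero_mem (A : E →ₗ[ℝ] E') (K : Set E') (C : Set E) : (0:E) ∈ Sset A K C :=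
  ⟨0, dualCone_zero_mem K, 0, dualCone_zero_mem C, by simp⟩

lemma Sset_add_mem {A : E →ₗ[ℝ] E'} {K : Set E'} {C : Set E} {u v : E}
    (hu : u ∈ Sset A K C) (hv : v ∈ Sset A K C) : u + v ∈ Sset A K C := by
  obtain ⟨y1, hy1, z1, hz1, rfl⟩ := hu
  obtain ⟨y2, hy2, z2, hz2, rfl⟩ := hv
  exact ⟨y1 + y2, dualCone_add_mem hy1 hy2, z1 + z2, dualCone_add_mem hz1 hz2, by
    rw [map_add]; abel⟩

lemma Sset_smul_mem {A : E →ₗ[ℝ] E'} {K : Set E'} {C : Set E} {u : E}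
    (hu : u ∈ Sset A K C) {c : ℝ} (hc : 0 ≤ c) : c • u ∈ Sset A K C := by
  obtain ⟨y, hy, z, hz, rfl⟩ := hu
  exact ⟨c • y, dualCone_smul_mem hy hc, c • z, dualCone_smul_mem hz hc, by
    rw [map_smul, smul_sub]⟩

lemma Sset_convex (A : E →ₗ[ℝ] E') (K : Set E') (C : Set E) : Convex ℝ (Sset A K C) := by
  intro u hu v hv a b ha hb hab
  exact Sset_add_mem (Sset_smul_mem hu ha) (Sset_smul_mem hv hb)

lemma dual_Sset {A : E →ₗ[ℝ] E'} {K : Set E'} {C : Set E}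
    (hK : IsClosedConvexCone K) (hC : IsClosedConvexCone C) :
    dualCone (Sset A K C) = recXSet A K C := by
  ext x
  constructor
  · intro hx
    constructor
    · rw [show C = dualCone (dualCone C) from (bipolar hC).symm]
      intro z hz
      have h := hx (z - LinearMap.adjoint A 0) ⟨0, dualCone_zero_mem K, z, hz, rfl⟩
      simpa using h
    · rw [Set.mem_neg, show K = dualCone (dualCone K) from (bipolar hK).symm]
      intro y hy
      have h := hx (0 - LinearMap.adjoint A y) ⟨y, hy, 0, dualCone_zero_mem C, rfl⟩
      rw [zero_sub, inner_neg_left, LinearMap.adjoint_inner_left] at h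
      rw [inner_neg_right]
      linarith
  · rintro ⟨hxC, hAx⟩ v ⟨y, hy, z, hz, rfl⟩
    have h1 : 0 ≤ ⟪x, z⟫ := hz x hxC
    have h2 : 0 ≤ ⟪-A x, y⟫ := hy (-A x) (Set.mem_neg.mp hAx)
    rw [inner_neg_left] at h2
    rw [inner_sub_left, LinearMap.adjoint_inner_left]
    have h3 : ⟪y, A x⟫ = ⟪A x, y⟫ := real_inner_comm _ _
    have h4 : ⟪z, x⟫ = ⟪x, z⟫ := real_inner_comm _ _
    linarith

/-- Hard direction: if the recession cone is trivial, the dual is strictly feasible. -/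
lemma exists_relint_of_rec_zero {A : E →ₗ[ℝ] E'} {K : Set E'} {C : Set E}
    (hK : IsClosedConvexCone K) (hC : IsClosedConvexCone C)
    (hR : recXSet A K C = {0}) :
    ∃ y ∈ intrinsicInterior ℝ (dualCone K),
      LinearMap.adjoint A y ∈ intrinsicInterior ℝ (dualCone C) := by
  set S := Sset A K C with hSdef
  have hSconv : Convex ℝ S := Sset_convex A K C
  have hS0 : (0:E) ∈ S := Sset_zero_mem A K C
  have hSdual : dualCone S = {0} := by rw [hSdef, dual_Sset hK hC]; exact hR
  have hScl : IsClosedConvexCone (closure S) := by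
    refine ⟨isClosed_closure, hSconv.closure, ?_, subset_closure hS0⟩
    intro x hx t ht
    have h1 : (fun w : E => t • w) '' closure S ⊆ closure ((fun w : E => t • w) '' S) :=
      image_closure_subset_closure_image (continuous_const_smul t)
    have h2 : (fun w : E => t • w) '' S ⊆ S := by
      rintro - ⟨w, hw, rfl⟩; exact Sset_smul_mem hw ht
    exact closure_mono h2 (h1 ⟨x, hx, rfl⟩)
  have hclU : closure S = Set.univ := by
    have h1 : dualCone (closure S) = {0} := by rw [dualCone_closure]; exact hSdual
    have h2 := bipolar hScl
    rw [h1] at h2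
    have h3 : dualCone ({0} : Set E) = Set.univ := by
      ext v; simp [dualCone]
    rw [h3] at h2
    exact h2.symm
  have hSuniv : S = Set.univ := by
    obtain ⟨w, hw⟩ := Set.Nonempty.intrinsicInterior hSconv ⟨0, hS0⟩
    ext p
    simp only [Set.mem_univ, iff_true]
    have hz : (2:ℝ) • p - w ∈ closure S := by rw [hclU]; trivial
    have hcombo := combo_mem_intrinsicInterior hSconv hS0 hw hz
      (a := 1/2) (b := 1/2) (by norm_num) (by norm_num) (by norm_num)
    have heq : (1/2:ℝ) • w + (1/2:ℝ) • ((2:ℝ) • p - w) = p := by module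
    rw [heq] at hcombo
    exact intrinsicInterior_subset hcombo
  obtain ⟨y0, hy0⟩ := Set.Nonempty.intrinsicInterior
    (isClosedConvexCone_dualCone K).convex ⟨0, dualCone_zero_mem K⟩
  obtain ⟨z0, hz0⟩ := Set.Nonempty.intrinsicInterior
    (isClosedConvexCone_dualCone C).convex ⟨0, dualCone_zero_mem C⟩
  have hmem : LinearMap.adjoint A y0 - z0 ∈ S := by rw [hSuniv]; trivial
  obtain ⟨y1, hy1, z1, hz1, hvq⟩ := hmem
  have hkey : LinearMap.adjoint A (y0 + y1) = z0 + z1 := by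
    rw [sub_eq_iff_eq_add] at hvq
    rw [map_add, hvq]
    abel
  have hyrel : y0 + y1 ∈ intrinsicInterior ℝ (dualCone K) := by
    have hzc : y0 + (2:ℝ) • y1 ∈ closure (dualCone K) :=
      subset_closure (dualCone_add_mem (intrinsicInterior_subset hy0)
        (dualCone_smul_mem hy1 (by norm_num)))
    have hcombo := combo_mem_intrinsicInterior (isClosedConvexCone_dualCone K).convex
      (dualCone_zero_mem K) hy0 hzc (a := 1/2) (b := 1/2)
      (by norm_num) (by norm_num) (by norm_num)
    have heq : (1/2:ℝ) • y0 + (1/2:ℝ) • (y0 + (2:ℝ) • y1) = y0 + y1 := by module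
    rwa [heq] at hcombo
  have hzrel : z0 + z1 ∈ intrinsicInterior ℝ (dualCone C) := by
    have hzc : z0 + (2:ℝ) • z1 ∈ closure (dualCone C) :=
      subset_closure (dualCone_add_mem (intrinsicInterior_subset hz0)
        (dualCone_smul_mem hz1 (by norm_num)))
    have hcombo := combo_mem_intrinsicInterior (isClosedConvexCone_dualCone C).convex
      (dualCone_zero_mem C) hz0 hzc (a := 1/2) (b := 1/2)
      (by norm_num) (by norm_num) (by norm_num)
    have heq : (1/2:ℝ) • z0 + (1/2:ℝ) • (z0 + (2:ℝ) • z1) = z0 + z1 := by module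
    rwa [heq] at hcombo
  exact ⟨y0 + y1, hyrel, by rw [hkey]; exact hzrel⟩

/-- Easy direction: strict dual feasibility plus pointedness forces trivial recession cone. -/
lemma rec_zero_of_relint {A : E →ₗ[ℝ] E'} {K : Set E'} {C : Set E}
    (hK : IsClosedConvexCone K) (hC : IsClosedConvexCone C)
    (hpointed : recXSet A K C ∩ (-(recXSet A K C)) = {0})
    (hrel : ∃ y ∈ intrinsicInterior ℝ (dualCone K),
      LinearMap.adjoint A y ∈ intrinsicInterior ℝ (dualCone C)) :
    recXSet A K C = {0} := by
  obtain ⟨y, hy, hAy⟩ := hrel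
  apply Set.Subset.antisymm
  · rintro x ⟨hxC, hAx⟩
    have hyK : y ∈ dualCone K := intrinsicInterior_subset hy
    have hwC : LinearMap.adjoint A y ∈ dualCone C := intrinsicInterior_subset hAy
    have h0 : ⟪x, LinearMap.adjoint A y⟫ = 0 := by
      have h1 : 0 ≤ ⟪x, LinearMap.adjoint A y⟫ := hwC x hxC
      have h2 : 0 ≤ ⟪-A x, y⟫ := hyK (-A x) (Set.mem_neg.mp hAx)
      rw [inner_neg_left] at h2
      have h3 : ⟪x, LinearMap.adjoint A y⟫ = ⟪y, A x⟫ := by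
        rw [real_inner_comm, LinearMap.adjoint_inner_left]
      have h4 : ⟪A x, y⟫ = ⟪y, A x⟫ := real_inner_comm _ _
      linarith
    have hxC' : -x ∈ C := by
      rw [show C = dualCone (dualCone C) from (bipolar hC).symm]
      intro z hz
      obtain ⟨t, ht, hmem⟩ := intrinsic_extend hAy hz
      have h5 := hmem x hxC
      rw [inner_add_right, real_inner_smul_right, inner_sub_right, h0] at h5
      have hxz : ⟪x, z⟫ ≤ 0 := by nlinarith
      rw [inner_neg_right, real_inner_comm]
      linarith
    have hAxK : A x ∈ K := by
      rw [show K = dualCone (dualCone K) from (bipolar hK).symm]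
      intro u hu
      obtain ⟨t, ht, hmem⟩ := intrinsic_extend hy hu
      have h6 := hmem (-A x) (Set.mem_neg.mp hAx)
      have h5 : ⟪-A x, y⟫ = 0 := by
        have e1 : ⟪A x, y⟫ = ⟪y, A x⟫ := real_inner_comm _ _
        have e2 : ⟪y, A x⟫ = ⟪LinearMap.adjoint A y, x⟫ :=
          (LinearMap.adjoint_inner_left A x y).symm
        have e3 : ⟪LinearMap.adjoint A y, x⟫ = ⟪x, LinearMap.adjoint A y⟫ := real_inner_comm _ _
        rw [inner_neg_left, e1, e2, e3, h0, neg_zero]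
      rw [inner_add_right, real_inner_smul_right, inner_sub_right, h5] at h6
      have h7 : ⟪-A x, u⟫ ≤ 0 := by nlinarith
      rw [inner_neg_left] at h7
      rw [real_inner_comm]
      linarith
    have hx2 : x ∈ recXSet A K C ∩ (-(recXSet A K C)) := by
      refine ⟨⟨hxC, hAx⟩, ?_⟩
      rw [Set.mem_neg]
      refine ⟨hxC', ?_⟩
      rw [Set.mem_neg, map_neg, neg_neg]
      exact hAxK
    rw [hpointed] at hx2
    exact hx2
  · rw [Set.singleton_subset_iff]
    exact ⟨hC.zero_mem, by rw [Set.mem_neg, map_zero, neg_zero]; exact hK.zero_mem⟩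

lemma rec_zero_mem {A : E →ₗ[ℝ] E'} {K : Set E'} {C : Set E}
    (hK : IsClosedConvexCone K) (hC : IsClosedConvexCone C) :
    (0:E) ∈ recXSet A K C :=
  ⟨hC.zero_mem, by rw [Set.mem_neg, map_zero, neg_zero]; exact hK.zero_mem⟩

/-- Bounded feasible set implies trivial recession cone. -/
lemma rec_zero_of_bounded {A : E →ₗ[ℝ] E'} {K : Set E'} {C : Set E} {b : E'}
    (hK : IsClosedConvexCone K) (hC : IsClosedConvexCone C)
    (hXne : (Xfeas A K C b).Nonempty) (hbdd : IsBounded (Xfeas A K C b)) :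
    recXSet A K C = {0} := by
  apply Set.Subset.antisymm
  · rintro x ⟨hxC, hAx⟩
    obtain ⟨x0, hx0C, hx0K⟩ := hXne
    obtain ⟨M, hM⟩ := isBounded_iff_forall_norm_le.mp hbdd
    have hmem : ∀ n : ℕ, x0 + (n:ℝ) • x ∈ Xfeas A K C b := by
      intro n
      refine ⟨hC.add_mem_s11 hx0C (hC.smul_mem hxC n.cast_nonneg), ?_⟩
      have heq : b - A (x0 + (n:ℝ) • x) = (b - A x0) + (n:ℝ) • (-A x) := by
        rw [map_add, map_smul]
        module
      rw [heq]
      exact hK.add_mem_s11 hx0K (hK.smul_mem (Set.mem_neg.mp hAx) n.cast_nonneg)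
    by_contra hxne
    have hxpos : 0 < ‖x‖ := norm_pos_iff.mpr (by simpa using hxne)
    have h1 : ∀ n : ℕ, (n:ℝ) * ‖x‖ ≤ M + ‖x0‖ := by
      intro n
      have h2 := hM _ (hmem n)
      have h3 : ‖(n:ℝ) • x‖ ≤ ‖x0 + (n:ℝ) • x‖ + ‖x0‖ := by
        have := norm_sub_le (x0 + (n:ℝ) • x) x0
        simpa [add_sub_cancel_left] using this
      rw [norm_smul, Real.norm_natCast] at h3
      linarith
    obtain ⟨n, hn⟩ := exists_nat_gt ((M + ‖x0‖) / ‖x‖)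
    rw [div_lt_iff₀ hxpos] at hn
    have := h1 n
    linarith
  · rw [Set.singleton_subset_iff]
    exact rec_zero_mem hK hC

/-- Trivial recession cone implies bounded feasible set. -/
lemma bounded_of_rec_zero {A : E →ₗ[ℝ] E'} {K : Set E'} {C : Set E} {b : E'}
    (hK : IsClosedConvexCone K) (hC : IsClosedConvexCone C)
    (hR : recXSet A K C = {0}) : IsBounded (Xfeas A K C b) := by
  by_contra hub
  rw [isBounded_iff_forall_norm_le] at hub
  push_neg at hub
  choose f hf1 hf2 using fun n : ℕ => hub (n:ℝ)
  have hfpos : ∀ n, 0 < ‖f n‖ := fun n => lt_of_le_of_lt (Nat.cast_nonneg n) (hf2 n)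
  set u : ℕ → E := fun n => ‖f n‖⁻¹ • f n with hu_def
  have hu : ∀ n, u n ∈ Metric.sphere (0:E) 1 := by
    intro n
    simp only [hu_def, mem_sphere_iff_norm, sub_zero, norm_smul, norm_inv, norm_norm]
    exact inv_mul_cancel₀ (hfpos n).ne'
  obtain ⟨d, hd, φ, hφ, hlim⟩ := (isCompact_sphere (0:E) 1).tendsto_subseq hu
  have hdne : d ≠ 0 := by
    intro h
    rw [h, mem_sphere_iff_norm, sub_zero, norm_zero] at hd
    norm_num at hd
  have hnorm_tend : Tendsto (fun k => ‖f (φ k)‖) atTop atTop := by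
    apply tendsto_atTop_mono (fun k => ?_) tendsto_natCast_atTop_atTop
    calc ((k:ℝ)) ≤ (φ k : ℝ) := by exact_mod_cast hφ.le_apply
    _ ≤ ‖f (φ k)‖ := (hf2 (φ k)).le
  have hinv : Tendsto (fun k => ‖f (φ k)‖⁻¹) atTop (nhds 0) :=
    tendsto_inv_atTop_zero.comp hnorm_tend
  have hAcont : Continuous A := A.continuous_of_finiteDimensional
  have hdC : d ∈ C := by
    apply hC.closed.mem_of_tendsto hlim
    exact Filter.Eventually.of_forall fun k =>
      hC.smul_mem (hf1 (φ k)).1 (inv_nonneg.mpr (norm_nonneg _))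
  have hAd : -A d ∈ K := by
    have hterm : ∀ k, ‖f (φ k)‖⁻¹ • (b - A (f (φ k))) ∈ K := fun k =>
      hK.smul_mem (hf1 (φ k)).2 (inv_nonneg.mpr (norm_nonneg _))
    have hrw : ∀ k, ‖f (φ k)‖⁻¹ • (b - A (f (φ k))) = ‖f (φ k)‖⁻¹ • b - A (u (φ k)) := by
      intro k
      simp only [hu_def, smul_sub, map_smul]
    have htend : Tendsto (fun k => ‖f (φ k)‖⁻¹ • b - A (u (φ k))) atTop (nhds (-A d)) := by
      have h1 : Tendsto (fun k => ‖f (φ k)‖⁻¹ • b) atTop (nhds ((0:ℝ) • b)) :=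
        hinv.smul_const b
      have h2 : Tendsto (fun k => A (u (φ k))) atTop (nhds (A d)) :=
        (hAcont.tendsto d).comp hlim
      have := h1.sub h2
      simpa using this
    apply hK.closed.mem_of_tendsto htend
    exact Filter.Eventually.of_forall fun k => by rw [← hrw]; exact hterm k
  have hdR : d ∈ recXSet A K C := ⟨hdC, by rw [Set.mem_neg]; exact hAd⟩
  rw [hR] at hdR
  exact hdne hdR

end MainLemmas

theorem stmt11 (A : E →ₗ[ℝ] E') (K : Set E') (C : Set E)
    (hK : IsClosedConvexCone K) (hC : IsClosedConvexCone C) (b : E')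
    (hXne : (Xfeas A K C b).Nonempty)
    (hpointed : recXSet A K C ∩ (-(recXSet A K C)) = {0}) :
    (Bornology.IsBounded (Xfeas A K C b) ↔
      ∃ y ∈ intrinsicInterior ℝ (dualCone K),
        LinearMap.adjoint A y ∈ intrinsicInterior ℝ (dualCone C)) ∧
    Xor' (∃ x ∈ C, x ≠ 0 ∧ A x ∈ -K)
      (∃ y ∈ intrinsicInterior ℝ (dualCone K),
        LinearMap.adjoint A y ∈ intrinsicInterior ℝ (dualCone C)) := by
  have hrelint_iff : (∃ y ∈ intrinsicInterior ℝ (dualCone K),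
      LinearMap.adjoint A y ∈ intrinsicInterior ℝ (dualCone C)) ↔ recXSet A K C = {0} :=
    ⟨rec_zero_of_relint hK hC hpointed, exists_relint_of_rec_zero hK hC⟩
  have hbdd_iff : Bornology.IsBounded (Xfeas A K C b) ↔ recXSet A K C = {0} :=
    ⟨rec_zero_of_bounded hK hC hXne, bounded_of_rec_zero hK hC⟩
  refine ⟨by rw [hbdd_iff, hrelint_iff], ?_⟩
  by_cases hR : recXSet A K C = {0}
  · refine Or.inr ⟨hrelint_iff.mpr hR, ?_⟩
    rintro ⟨x, hxC, hxne, hAx⟩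
    have : x ∈ recXSet A K C := ⟨hxC, hAx⟩
    rw [hR] at this
    exact hxne this
  · refine Or.inl ⟨?_, fun hrel => hR (hrelint_iff.mp hrel)⟩
    by_contra hno
    push_neg at hno
    apply hR
    apply Set.Subset.antisymm
    · rintro x ⟨hxC, hAx⟩
      by_contra hxne
      exact (hno x hxC (by simpa using hxne)) hAx
    · rw [Set.singleton_subset_iff]
      exact rec_zero_mem hK hC
end
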